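/- Let A ∈ B(H) with ‖A‖ ≤ 1 and define V_A : ℓ²(H) → ℓ²(H) by V_A(h₁, h₂, h₃, …) = (A h₁, D h₁, h₂, h₃, …) where D = √(I − A*A). Then V_A is an isometry, and for every polynomial f, f(A) = P_H f(V_A)|_H, where H is identified with the first coordinate of ℓ²(H). -/

import Mathlib

set_option maxHeartbeats 1000000


open ContinuousLinearMap Polynomial

theorem shift_dilation_isometry_and_polynomial_compression
    {H : Type*} [NormedAddCommGroup H] [InnerProductSpace ℂ H] [CompleteSpace H]
    (A : H →L[ℂ] H) (hA : ‖A‖ ≤ 1)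
    (D : H →L[ℂ] H) (hD : D.IsPositive) (hD2 : D * D = 1 - adjoint A * A)
    (V : lp (fun _ : ℕ => H) 2 →L[ℂ] lp (fun _ : ℕ => H) 2)
    (hV : ∀ x : lp (fun _ : ℕ => H) 2,
      (V x) 0 = A (x 0) ∧ (V x) 1 = D (x 0) ∧ ∀ n : ℕ, (V x) (n + 2) = x (n + 1)) :
    Isometry V ∧
      ∀ (f : Polynomial ℂ) (h : H),
        (aeval A f) h = ((aeval V f) (lp.single 2 0 h)) 0 := by
  have hDsa : adjoint D = D := hD.isSelfAdjoint
  -- key pointwise identity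
  have key : ∀ v : H, ‖A v‖ ^ 2 + ‖D v‖ ^ 2 = ‖v‖ ^ 2 := by
    intro v
    have h1 : ‖A v‖ ^ 2 = RCLike.re (inner ℂ (v : H) ((adjoint A * A) v) : ℂ) := by
      rw [ContinuousLinearMap.mul_apply, adjoint_inner_right]
      exact (inner_self_eq_norm_sq (A v)).symm
    have h2 : ‖D v‖ ^ 2 = RCLike.re (inner ℂ (v : H) ((D * D) v) : ℂ) := by
      rw [show D * D = adjoint D * D from by rw [hDsa]]
      rw [ContinuousLinearMap.mul_apply, adjoint_inner_right]
      exact (inner_self_eq_norm_sq (D v)).symm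
    rw [h1, h2, ← map_add, ← inner_add_right]
    have : (adjoint A * A) v + (D * D) v = v := by
      rw [hD2]; simp
    rw [this]
    exact inner_self_eq_norm_sq v
  have htwo : (2 : ENNReal).toReal = 2 := by norm_num
  have hpos : (0 : ℝ) < (2 : ENNReal).toReal := by norm_num
  constructor
  · refine AddMonoidHomClass.isometry_of_norm V (fun x => ?_)
    obtain ⟨h0, h1, hn⟩ := hV x
    have hsum : ∀ y : lp (fun _ : ℕ => H) 2,
        Summable (fun i : ℕ => ‖(y : ∀ _ : ℕ, H) i‖ ^ (2 : ℝ)) :=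
      fun y => (lp.memℓp y).summable hpos
    have hVx : ‖V x‖ ^ (2 : ℝ) = ∑' i, ‖(V x : ∀ _ : ℕ, H) i‖ ^ (2 : ℝ) :=
      htwo ▸ lp.norm_rpow_eq_tsum hpos (V x)
    have hx : ‖x‖ ^ (2 : ℝ) = ∑' i, ‖(x : ∀ _ : ℕ, H) i‖ ^ (2 : ℝ) :=
      htwo ▸ lp.norm_rpow_eq_tsum hpos x
    have hsplitV : ∑' i, ‖(V x : ∀ _ : ℕ, H) i‖ ^ (2 : ℝ)
        = ‖(V x : ∀ _ : ℕ, H) 0‖ ^ (2 : ℝ) + (‖(V x : ∀ _ : ℕ, H) 1‖ ^ (2 : ℝ)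
          + ∑' n, ‖(V x : ∀ _ : ℕ, H) (n + 2)‖ ^ (2 : ℝ)) := by
      rw [Summable.tsum_eq_zero_add (hsum (V x)), Summable.tsum_eq_zero_add ((summable_nat_add_iff 1).2 (hsum (V x)))]
    have hsplitx : ∑' i, ‖(x : ∀ _ : ℕ, H) i‖ ^ (2 : ℝ)
        = ‖(x : ∀ _ : ℕ, H) 0‖ ^ (2 : ℝ) + ∑' n, ‖(x : ∀ _ : ℕ, H) (n + 1)‖ ^ (2 : ℝ) := by
      rw [Summable.tsum_eq_zero_add (hsum x)]
    have hsq : ‖V x‖ ^ (2 : ℝ) = ‖x‖ ^ (2 : ℝ) := by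
      rw [hVx, hx, hsplitV, hsplitx, h0, h1]
      have : ∀ n : ℕ, ‖(V x : ∀ _ : ℕ, H) (n + 2)‖ ^ (2 : ℝ)
          = ‖(x : ∀ _ : ℕ, H) (n + 1)‖ ^ (2 : ℝ) := fun n => by rw [hn n]
      rw [tsum_congr this, ← add_assoc]
      congr 1
      have := key ((x : ∀ _ : ℕ, H) 0)
      rw [← Real.rpow_natCast (‖A _‖) 2, ← Real.rpow_natCast (‖D _‖) 2,
        ← Real.rpow_natCast (‖_‖) 2] at this
      simpa using this
    have hsq' : ‖V x‖ ^ 2 = ‖x‖ ^ 2 := by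
      rw [show ((2 : ℝ)) = ((2 : ℕ) : ℝ) by norm_cast, Real.rpow_natCast, Real.rpow_natCast] at hsq
      exact hsq
    have := congrArg Real.sqrt hsq'
    simpa [Real.sqrt_sq, norm_nonneg] using this
  · intro f h
    set s : lp (fun _ : ℕ => H) 2 := lp.single 2 0 h with hs
    have hs0 : (s : ∀ _ : ℕ, H) 0 = h := lp.single_apply_self (E := fun _ : ℕ => H) 2 0 h
    have hpow : ∀ n : ℕ, ((V ^ n) s : ∀ _ : ℕ, H) 0 = (A ^ n) h := by
      intro n
      induction n with
      | zero => simpa using hs0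
      | succ k ih =>
        rw [pow_succ', pow_succ', ContinuousLinearMap.mul_apply, ContinuousLinearMap.mul_apply, (hV ((V ^ k) s)).1, ih]
    induction f using Polynomial.induction_on' with
    | add p q hp hq =>
      rw [map_add, map_add, ContinuousLinearMap.add_apply, ContinuousLinearMap.add_apply,
        lp.coeFn_add, Pi.add_apply, hp, hq]
    | monomial n a =>
      rw [aeval_monomial, aeval_monomial, ContinuousLinearMap.mul_apply,
        ContinuousLinearMap.mul_apply]
      simp only [Algebra.algebraMap_eq_smul_one, ContinuousLinearMap.smul_apply,
        ContinuousLinearMap.one_apply]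
      rw [lp.coeFn_smul, Pi.smul_apply, hpow n]
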